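/- The following statement is equivalent to 2^{ℵ₀} < ℵ_ω: there exist a natural number m and a finite-to-one function σ from the (m+1)-element subsets of the real unit interval [0,1] to its m-element subsets with σ(A) ⊆ A for all A. -/

import Mathlib

open Cardinal

/-- An (m+1)→m monotone finite-to-one compression scheme on `α`. -/
def MyScheme (α : Type) (m : ℕ) : Prop :=
  ∃ σ : Finset α → Finset α,
    (∀ A, A.card = m + 1 → σ A ⊆ A ∧ (σ A).card = m) ∧
    ∀ B, {A | A.card = m + 1 ∧ σ A = B}.Finite

lemma myscheme_of_embedding {α β : Type} (f : α ↪ β) {m : ℕ}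
    (h : MyScheme β m) : MyScheme α m := by
  classical
  obtain ⟨σ, hσ, hfin⟩ := h
  refine ⟨fun A => A.filter (fun a => f a ∈ σ (A.map f)), ?_, ?_⟩
  · intro A hA
    have hsub : σ (A.map f) ⊆ A.map f := (hσ _ (by simp [hA])).1
    have hmap : (A.filter (fun a => f a ∈ σ (A.map f))).map f = σ (A.map f) := by
      ext b
      simp only [Finset.mem_map, Finset.mem_filter]
      constructor
      · rintro ⟨a, ⟨ha, hb⟩, rfl⟩; exact hb
      · intro hb
        obtain ⟨a, ha, rfl⟩ := Finset.mem_map.1 (hsub hb)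
        exact ⟨a, ⟨ha, hb⟩, rfl⟩
    refine ⟨Finset.filter_subset _ _, ?_⟩
    have := congrArg Finset.card hmap
    rw [Finset.card_map] at this
    rw [this, (hσ _ (by simp [hA])).2]
  · intro B
    have key : ∀ A ∈ {A : Finset α | A.card = m + 1 ∧
        A.filter (fun a => f a ∈ σ (A.map f)) = B},
        (A.map f).card = m + 1 ∧ σ (A.map f) = B.map f := by
      rintro A ⟨hA, hB⟩
      have hsub : σ (A.map f) ⊆ A.map f := (hσ _ (by simp [hA])).1
      have hmap : (A.filter (fun a => f a ∈ σ (A.map f))).map f = σ (A.map f) := by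
        ext b
        simp only [Finset.mem_map, Finset.mem_filter]
        constructor
        · rintro ⟨a, ⟨ha, hb⟩, rfl⟩; exact hb
        · intro hb
          obtain ⟨a, ha, rfl⟩ := Finset.mem_map.1 (hsub hb)
          exact ⟨a, ⟨ha, hb⟩, rfl⟩
      rw [hB] at hmap
      exact ⟨by simp [hA], hmap.symm⟩
    apply Set.Finite.of_finite_image (f := fun A : Finset α => A.map f)
    · apply (hfin (B.map f)).subset
      rintro _ ⟨A, hA, rfl⟩
      exact ⟨(key A hA).1, (key A hA).2⟩
    · intro A₁ h₁ A₂ h₂ h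
      exact Finset.map_injective f h

lemma myscheme_nat : MyScheme ℕ 1 := by
  classical
  refine ⟨fun A => if h : A.Nonempty then {A.max' h} else ∅, ?_, ?_⟩
  · intro A hA
    have h : A.Nonempty := Finset.card_pos.1 (by omega)
    simp only [dif_pos h]
    exact ⟨Finset.singleton_subset_iff.2 (A.max'_mem h), rfl⟩
  · intro B
    by_cases hne : {A : Finset ℕ | A.card = 1 + 1 ∧
        (if h : A.Nonempty then ({A.max' h} : Finset ℕ) else ∅) = B}.Nonempty
    · obtain ⟨A₀, hA₀c, hA₀⟩ := hne
      have h₀ : A₀.Nonempty := Finset.card_pos.1 (by omega)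
      rw [dif_pos h₀] at hA₀
      set n := A₀.max' h₀ with hn
      apply Set.Finite.subset ((Finset.range (n+1)).powerset : Finset (Finset ℕ)).finite_toSet
      rintro A ⟨hAc, hAB⟩
      have h : A.Nonempty := Finset.card_pos.1 (by omega)
      simp only [dif_pos h] at hAB
      rw [← hA₀] at hAB
      have hmax : A.max' h = n := by
        have := Finset.singleton_injective hAB
        simpa [hn] using this
      simp only [Finset.coe_powerset, Set.mem_preimage, Set.mem_powerset_iff,
        Finset.coe_range, Finset.mem_coe, Finset.mem_powerset]
      intro x hx
      have hx2 : x ≤ n := by rw [← hmax]; exact Finset.le_max' A x hx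
      exact Nat.lt_succ_of_le hx2
    · rw [Set.not_nonempty_iff_eq_empty] at hne
      rw [hne]; exact Set.finite_empty

lemma myscheme_of_card_le : ∀ (k : ℕ) (α : Type), #α ≤ Cardinal.aleph k → MyScheme α (k + 1) := by
  intro k
  induction k with
  | zero =>
    intro α hα
    have h0 : #α ≤ #ℕ := by
      rwa [mk_nat, ← aleph_zero, ← Nat.cast_zero (R := Ordinal)]
    obtain ⟨f⟩ := (Cardinal.le_def _ _).1 h0
    exact myscheme_of_embedding f myscheme_nat
  | succ k ih =>
    intro α hα
    classical
    suffices hγ : MyScheme (Cardinal.aleph ((k + 1 : ℕ) : Ordinal)).ord.ToType (k + 1 + 1) by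
      have h0 : #α ≤ #(Cardinal.aleph ((k + 1 : ℕ) : Ordinal)).ord.ToType := by
        rwa [mk_ord_toType]
      obtain ⟨f⟩ := (Cardinal.le_def _ _).1 h0
      exact myscheme_of_embedding f hγ
    have hsucc : Cardinal.aleph ((k + 1 : ℕ) : Ordinal) = Order.succ (Cardinal.aleph k) := by
      push_cast
      rw [Ordinal.add_one_eq_succ, aleph_succ]
    have hsmall : ∀ x : (Cardinal.aleph ((k + 1 : ℕ) : Ordinal)).ord.ToType,
        #{y // y < x} ≤ Cardinal.aleph k := by
      intro x
      have h1 := mk_Iio_ord_toType x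
      exact Order.lt_succ_iff.1 (lt_of_lt_of_eq h1 hsucc)
    have hsch : ∀ x : (Cardinal.aleph ((k + 1 : ℕ) : Ordinal)).ord.ToType,
        MyScheme {y // y < x} (k + 1) := fun x => ih _ (hsmall x)
    choose σ h1 h2 using hsch
    refine ⟨fun A => if h : A.Nonempty then
        insert (A.max' h)
          ((σ (A.max' h) ((A.erase (A.max' h)).subtype (· < A.max' h))).map
            (Function.Embedding.subtype _))
      else ∅, ?_, ?_⟩
    · intro A hA
      have h : A.Nonempty := Finset.card_pos.1 (by omega)
      have hlt : ∀ y ∈ A.erase (A.max' h), y < A.max' h := by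
        intro y hy
        rcases Finset.mem_erase.1 hy with ⟨hne, hmem⟩
        exact lt_of_le_of_ne (Finset.le_max' A y hmem) hne
      have hCmap : ((A.erase (A.max' h)).subtype (· < A.max' h)).map
          (Function.Embedding.subtype _) = A.erase (A.max' h) :=
        Finset.subtype_map_of_mem hlt
      have hCcard : ((A.erase (A.max' h)).subtype (· < A.max' h)).card = (k + 1) + 1 := by
        have h' := congrArg Finset.card hCmap
        rw [Finset.card_map] at h'
        rw [h', Finset.card_erase_of_mem (A.max'_mem h), hA]
        omega
      obtain ⟨hsub, hcard⟩ := h1 (A.max' h) _ hCcard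
      have hmapsub : (σ (A.max' h) ((A.erase (A.max' h)).subtype (· < A.max' h))).map
          (Function.Embedding.subtype _) ⊆ A.erase (A.max' h) := by
        intro y hy
        obtain ⟨⟨z, hz⟩, hzmem, rfl⟩ := Finset.mem_map.1 hy
        simpa using Finset.mem_subtype.1 (hsub hzmem)
      simp only [dif_pos h]
      constructor
      · intro y hy
        rcases Finset.mem_insert.1 hy with rfl | hy
        · exact A.max'_mem h
        · exact Finset.erase_subset _ _ (hmapsub hy)
      · rw [Finset.card_insert_of_notMem, Finset.card_map, hcard]
        intro hmem
        exact (Finset.mem_erase.1 (hmapsub hmem)).1 rfl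
    · intro B
      by_cases hne : {A : Finset (Cardinal.aleph ((k + 1 : ℕ) : Ordinal)).ord.ToType |
          A.card = (k + 1 + 1) + 1 ∧
          (if h : A.Nonempty then
            insert (A.max' h)
              ((σ (A.max' h) ((A.erase (A.max' h)).subtype (· < A.max' h))).map
                (Function.Embedding.subtype _))
          else ∅) = B}.Nonempty
      · obtain ⟨A₀, hA₀c, hA₀⟩ := hne
        have h₀ : A₀.Nonempty := Finset.card_pos.1 (by omega)
        simp only [dif_pos h₀] at hA₀
        set x₀ := A₀.max' h₀ with hx₀
        have hx₀B : x₀ ∈ B := by rw [← hA₀]; exact Finset.mem_insert_self _ _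
        have hBle : ∀ b ∈ B, b ≤ x₀ := by
          intro b hb
          rw [← hA₀] at hb
          rcases Finset.mem_insert.1 hb with rfl | hb
          · exact le_refl _
          · obtain ⟨⟨y, hy⟩, hmem, rfl⟩ := Finset.mem_map.1 hb
            exact le_of_lt hy
        have hBx : ∀ b ∈ B.erase x₀, b < x₀ := fun b hb =>
          lt_of_le_of_ne (hBle b (Finset.mem_erase.1 hb).2) (Finset.mem_erase.1 hb).1
        have hBsub : ((B.erase x₀).subtype (· < x₀)).map (Function.Embedding.subtype _)
            = B.erase x₀ := Finset.subtype_map_of_mem hBx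
        have key : ∀ A : Finset (Cardinal.aleph ((k + 1 : ℕ) : Ordinal)).ord.ToType,
            A.card = (k + 1 + 1) + 1 →
            (if h : A.Nonempty then
              insert (A.max' h)
                ((σ (A.max' h) ((A.erase (A.max' h)).subtype (· < A.max' h))).map
                  (Function.Embedding.subtype _))
            else ∅) = B →
            x₀ ∈ A ∧ (∀ y ∈ A.erase x₀, y < x₀) ∧
            ((A.erase x₀).subtype (· < x₀)).card = (k + 1) + 1 ∧
            σ x₀ ((A.erase x₀).subtype (· < x₀)) = (B.erase x₀).subtype (· < x₀) := by
          intro A hAc hAB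
          have h : A.Nonempty := Finset.card_pos.1 (by omega)
          simp only [dif_pos h] at hAB
          have hxB : A.max' h ∈ B := by rw [← hAB]; exact Finset.mem_insert_self _ _
          have hBlex : ∀ b ∈ B, b ≤ A.max' h := by
            intro b hb
            rw [← hAB] at hb
            rcases Finset.mem_insert.1 hb with rfl | hb
            · exact le_refl _
            · obtain ⟨⟨y, hy⟩, hmem, rfl⟩ := Finset.mem_map.1 hb
              exact le_of_lt hy
          have hxx₀ : A.max' h = x₀ := le_antisymm (hBle _ hxB) (hBlex x₀ hx₀B)
          rw [hxx₀] at hAB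
          have hx₀A : x₀ ∈ A := hxx₀ ▸ A.max'_mem h
          have hlt : ∀ y ∈ A.erase x₀, y < x₀ := by
            intro y hy
            rcases Finset.mem_erase.1 hy with ⟨hne', hmem⟩
            exact lt_of_le_of_ne (hxx₀ ▸ Finset.le_max' A y hmem) hne'
          have hCmap : ((A.erase x₀).subtype (· < x₀)).map
              (Function.Embedding.subtype _) = A.erase x₀ :=
            Finset.subtype_map_of_mem hlt
          have hCcard : ((A.erase x₀).subtype (· < x₀)).card = (k + 1) + 1 := by
            have h' := congrArg Finset.card hCmap
            rw [Finset.card_map] at h'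
            rw [h', Finset.card_erase_of_mem hx₀A, hAc]
            omega
          have hnotmem : x₀ ∉ (σ x₀ ((A.erase x₀).subtype (· < x₀))).map
              (Function.Embedding.subtype fun y => y < x₀) := by
            intro hmem
            obtain ⟨⟨y, hy⟩, _, h'⟩ := Finset.mem_map.1 hmem
            rw [Function.Embedding.coe_subtype] at h'
            rw [← h'] at hy
            exact lt_irrefl _ hy
          have hBerase : B.erase x₀ = (σ x₀ ((A.erase x₀).subtype (· < x₀))).map
              (Function.Embedding.subtype _) := by
            rw [← hAB, Finset.erase_insert hnotmem]
          refine ⟨hx₀A, hlt, hCcard, ?_⟩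
          apply Finset.map_injective (Function.Embedding.subtype (· < x₀))
          rw [hBsub]
          exact hBerase.symm
        apply Set.Finite.of_finite_image
          (f := fun A : Finset (Cardinal.aleph ((k + 1 : ℕ) : Ordinal)).ord.ToType =>
            (A.erase x₀).subtype (· < x₀))
        · apply (h2 x₀ ((B.erase x₀).subtype (· < x₀))).subset
          rintro _ ⟨A, hA, rfl⟩
          exact ⟨(key A hA.1 hA.2).2.2.1, (key A hA.1 hA.2).2.2.2⟩
        · intro A₁ hA₁ A₂ hA₂ heq
          obtain ⟨hm₁, hl₁, -, -⟩ := key A₁ hA₁.1 hA₁.2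
          obtain ⟨hm₂, hl₂, -, -⟩ := key A₂ hA₂.1 hA₂.2
          have e₁ : A₁.erase x₀ = ((A₁.erase x₀).subtype (· < x₀)).map
              (Function.Embedding.subtype _) := (Finset.subtype_map_of_mem hl₁).symm
          have e₂ : A₂.erase x₀ = ((A₂.erase x₀).subtype (· < x₀)).map
              (Function.Embedding.subtype _) := (Finset.subtype_map_of_mem hl₂).symm
          have heq' : A₁.erase x₀ = A₂.erase x₀ := by
            rw [e₁, e₂]
            exact congrArg _ heq
          calc A₁ = insert x₀ (A₁.erase x₀) := (Finset.insert_erase hm₁).symm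
            _ = insert x₀ (A₂.erase x₀) := by rw [heq']
            _ = A₂ := Finset.insert_erase hm₂
      · apply Set.Finite.subset Set.finite_empty
        intro A hA
        exact absurd ⟨A, hA⟩ hne

lemma myscheme_card_lt : ∀ (m : ℕ) (α : Type), MyScheme α m → #α < Cardinal.aleph m := by
  intro m
  induction m with
  | zero =>
    intro α h
    obtain ⟨σ, hσ, hfin⟩ := h
    have hr : (Set.range (fun a : α => ({a} : Finset α))).Finite := by
      apply (hfin ∅).subset
      rintro _ ⟨a, rfl⟩
      refine ⟨Finset.card_singleton a, ?_⟩
      exact Finset.card_eq_zero.1 (hσ {a} (Finset.card_singleton a)).2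
    have huniv : (Set.univ : Set α).Finite := by
      apply Set.Finite.of_finite_image (f := fun a : α => ({a} : Finset α))
      · rwa [Set.image_univ]
      · intro a _ b _ hab
        exact Finset.singleton_injective hab
    have : Finite α := Set.finite_univ_iff.1 huniv
    rw [Nat.cast_zero, aleph_zero]
    exact lt_aleph0_of_finite α
  | succ m ih =>
    intro α h
    by_contra hcon
    push_neg at hcon
    obtain ⟨σ, hσ, hfin⟩ := h
    classical
    have hlt : Cardinal.aleph (m : Ordinal) < Cardinal.aleph ((m + 1 : ℕ) : Ordinal) := by
      apply aleph_lt_aleph.2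
      exact_mod_cast Nat.lt_succ_self m
    obtain ⟨S, hS⟩ := Cardinal.le_mk_iff_exists_set.1 (le_trans hlt.le hcon)
    have hSinf : Infinite S := by
      rw [Cardinal.infinite_iff, hS]; exact aleph0_le_aleph _
    set emb : S ↪ α := Function.Embedding.subtype _ with hemb
    -- the finite "bad" sets
    set Dset : Finset S → Set α := fun C =>
      {x : α | x ∉ C.map emb ∧ (insert x (C.map emb)).card = (m + 1) + 1 ∧
        σ (insert x (C.map emb)) = C.map emb} with hDset
    have hD : ∀ C : Finset S, (Dset C).Finite := by
      intro C
      apply Set.Finite.of_finite_image (f := fun x => insert x (C.map emb))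
      · apply (hfin (C.map emb)).subset
        rintro _ ⟨x, ⟨hx, hc, hins⟩, rfl⟩
        exact ⟨hc, hins⟩
      · rintro x ⟨hx, -, -⟩ y ⟨hy, -, -⟩ hxy
        have : x ∈ insert y (C.map emb) := by
          show x ∈ (fun x => insert x (C.map emb)) y
          rw [← hxy]; exact Finset.mem_insert_self _ _
        rcases Finset.mem_insert.1 this with rfl | hmem
        · rfl
        · exact absurd hmem hx
    -- the union of bad sets is small
    set U : Set α := S ∪ ⋃ C : Finset S, Dset C with hU
    have hUcard : #U ≤ Cardinal.aleph (m : Ordinal) := by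
      have h1 : #(⋃ C : Finset S, Dset C) ≤ Cardinal.aleph (m : Ordinal) := by
        calc #(⋃ C : Finset S, Dset C) ≤ #(Finset S) * ⨆ C : Finset S, #(Dset C) :=
              Cardinal.mk_iUnion_le _
          _ ≤ Cardinal.aleph (m : Ordinal) * Cardinal.aleph (m : Ordinal) := by
              apply mul_le_mul'
              · rw [mk_finset_of_infinite, hS]
              · apply ciSup_le'
                intro C
                exact le_trans (hD C).lt_aleph0.le (aleph0_le_aleph _)
          _ = Cardinal.aleph (m : Ordinal) := mul_eq_self (aleph0_le_aleph _)
      calc #U ≤ #S + #(⋃ C : Finset S, Dset C) := mk_union_le _ _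
        _ ≤ Cardinal.aleph (m : Ordinal) + Cardinal.aleph (m : Ordinal) := by
            rw [hS]; exact add_le_add le_rfl h1
        _ = Cardinal.aleph (m : Ordinal) := add_eq_self (aleph0_le_aleph _)
    -- pick x outside
    have hx : ∃ x : α, x ∉ U := by
      by_contra hall
      push_neg at hall
      have : (Set.univ : Set α) ⊆ U := fun y _ => hall y
      have h2 := mk_le_mk_of_subset this
      rw [mk_univ] at h2
      exact absurd (lt_of_le_of_lt h2 (lt_of_le_of_lt hUcard hlt)) (not_lt.2 hcon)
    obtain ⟨x, hxU⟩ := hx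
    have hxS : x ∉ S := fun h' => hxU (Or.inl h')
    have hxD : ∀ C : Finset S, x ∉ Dset C := fun C h' =>
      hxU (Or.inr (Set.mem_iUnion.2 ⟨C, h'⟩))
    -- basic facts for C of the right size
    have hfacts : ∀ C : Finset S, C.card = m + 1 →
        x ∈ σ (insert x (C.map emb)) ∧
        (σ (insert x (C.map emb))).erase x ⊆ C.map emb ∧
        ((σ (insert x (C.map emb))).erase x).card = m := by
      intro C hC
      have hxA : x ∉ C.map emb := by
        intro hmem
        obtain ⟨⟨a, ha⟩, -, rfl⟩ := Finset.mem_map.1 hmem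
        exact hxS ha
      have hicard : (insert x (C.map emb)).card = (m + 1) + 1 := by
        rw [Finset.card_insert_of_notMem hxA, Finset.card_map, hC]
      obtain ⟨hsub, hcard⟩ := hσ _ hicard
      have hxin : x ∈ σ (insert x (C.map emb)) := by
        by_contra hxout
        have hsub' : σ (insert x (C.map emb)) ⊆ C.map emb := by
          intro b hb
          rcases Finset.mem_insert.1 (hsub hb) with rfl | hb'
          · exact absurd hb hxout
          · exact hb'
        have heq : σ (insert x (C.map emb)) = C.map emb := by
          apply Finset.eq_of_subset_of_card_le hsub'
          rw [hcard, Finset.card_map, hC]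
        exact hxD C ⟨hxA, hicard, heq⟩
      refine ⟨hxin, ?_, ?_⟩
      · intro b hb
        rcases Finset.mem_erase.1 hb with ⟨hbne, hbmem⟩
        rcases Finset.mem_insert.1 (hsub hbmem) with rfl | hb'
        · exact absurd rfl hbne
        · exact hb'
      · rw [Finset.card_erase_of_mem hxin, hcard]
        omega
    -- build the scheme on S
    have hscheme : MyScheme S m := by
      refine ⟨fun C => ((σ (insert x (C.map emb))).erase x).subtype (· ∈ S), ?_, ?_⟩
      · intro C hC
        obtain ⟨hxin, hEsub, hEcard⟩ := hfacts C hC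
        have hES : ∀ b ∈ (σ (insert x (C.map emb))).erase x, b ∈ S := by
          intro b hb
          obtain ⟨⟨a, ha⟩, -, rfl⟩ := Finset.mem_map.1 (hEsub hb)
          exact ha
        have hmap : (((σ (insert x (C.map emb))).erase x).subtype (· ∈ S)).map emb
            = (σ (insert x (C.map emb))).erase x := Finset.subtype_map_of_mem hES
        constructor
        · rw [← Finset.map_subset_map (f := emb), hmap]
          exact hEsub
        · have h' := congrArg Finset.card hmap
          rw [Finset.card_map] at h'
          rw [h', hEcard]
      · intro B'
        apply Set.Finite.of_finite_image (f := fun C : Finset S => insert x (C.map emb))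
        · apply (hfin (insert x (B'.map emb))).subset
          rintro _ ⟨C, ⟨hC, hτ⟩, rfl⟩
          obtain ⟨hxin, hEsub, hEcard⟩ := hfacts C hC
          have hxA : x ∉ C.map emb := by
            intro hmem
            obtain ⟨⟨a, ha⟩, -, rfl⟩ := Finset.mem_map.1 hmem
            exact hxS ha
          have hicard : (insert x (C.map emb)).card = (m + 1) + 1 := by
            rw [Finset.card_insert_of_notMem hxA, Finset.card_map, hC]
          refine ⟨hicard, ?_⟩
          have hES : ∀ b ∈ (σ (insert x (C.map emb))).erase x, b ∈ S := by
            intro b hb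
            obtain ⟨⟨a, ha⟩, -, rfl⟩ := Finset.mem_map.1 (hEsub hb)
            exact ha
          have hmap : (((σ (insert x (C.map emb))).erase x).subtype (· ∈ S)).map emb
              = (σ (insert x (C.map emb))).erase x := Finset.subtype_map_of_mem hES
          have hBmap : B'.map emb = (σ (insert x (C.map emb))).erase x := by
            rw [← hτ, hmap]
          rw [hBmap, Finset.insert_erase hxin]
        · intro C₁ hC₁ C₂ hC₂ heq
          have hx₁ : x ∉ C₁.map emb := by
            intro hmem
            obtain ⟨⟨a, ha⟩, -, rfl⟩ := Finset.mem_map.1 hmem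
            exact hxS ha
          have hx₂ : x ∉ C₂.map emb := by
            intro hmem
            obtain ⟨⟨a, ha⟩, -, rfl⟩ := Finset.mem_map.1 hmem
            exact hxS ha
          apply Finset.map_injective emb
          have := congrArg (fun T => Finset.erase T x) heq
          simpa [Finset.erase_insert hx₁, Finset.erase_insert hx₂] using this
    have hfinal := ih _ hscheme
    rw [hS] at hfinal
    exact lt_irrefl _ hfinal

theorem stmt0 :
    (Cardinal.continuum : Cardinal.{0}) < Cardinal.aleph Ordinal.omega0 ↔
    ∃ (m : ℕ) (σ : Finset (Set.Icc (0 : ℝ) 1) → Finset (Set.Icc (0 : ℝ) 1)),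
      (∀ A : Finset (Set.Icc (0 : ℝ) 1), A.card = m + 1 →
        σ A ⊆ A ∧ (σ A).card = m) ∧
      ∀ B : Finset (Set.Icc (0 : ℝ) 1),
        {A : Finset (Set.Icc (0 : ℝ) 1) | A.card = m + 1 ∧ σ A = B}.Finite := by
  have hmk : #(Set.Icc (0 : ℝ) 1) = Cardinal.continuum := Cardinal.mk_Icc_real zero_lt_one
  constructor
  · intro h
    have hex : ∃ n : ℕ, (Cardinal.continuum : Cardinal.{0}) ≤ Cardinal.aleph (n : Ordinal) := by
      by_contra hall
      push_neg at hall
      have hle : ∀ a : Set.Iio Ordinal.omega0, Cardinal.aleph a ≤ Cardinal.continuum := by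
        rintro ⟨a, ha⟩
        obtain ⟨n, rfl⟩ := Ordinal.lt_omega0.1 ha
        exact (hall n).le
      have : Nonempty (Set.Iio (Ordinal.omega0 : Ordinal.{0})) := ⟨⟨0, Ordinal.omega0_pos⟩⟩
      have hsup : Cardinal.aleph Ordinal.omega0 ≤ Cardinal.continuum := by
        rw [aleph_limit Ordinal.isSuccLimit_omega0]
        exact ciSup_le' hle
      exact absurd (lt_of_lt_of_le h hsup) (lt_irrefl _)
    obtain ⟨n, hn⟩ := hex
    have := myscheme_of_card_le n (Set.Icc (0 : ℝ) 1) (by rw [hmk]; exact hn)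
    obtain ⟨σ, h1, h2⟩ := this
    exact ⟨n + 1, σ, h1, h2⟩
  · rintro ⟨m, σ, h1, h2⟩
    have hsch : MyScheme (Set.Icc (0 : ℝ) 1) m := ⟨σ, h1, h2⟩
    have := myscheme_card_lt m _ hsch
    rw [hmk] at this
    exact lt_trans this (aleph_lt_aleph.2 (Ordinal.nat_lt_omega0 m))


theorem stmt_14 :
    Cardinal.continuum < Cardinal.aleph Ordinal.omega0 ↔
    ∃ (m : ℕ) (σ : Finset (Set.Icc (0 : ℝ) 1) → Finset (Set.Icc (0 : ℝ) 1)),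
      (∀ A : Finset (Set.Icc (0 : ℝ) 1), A.card = m + 1 →
        σ A ⊆ A ∧ (σ A).card = m) ∧
      ∀ B : Finset (Set.Icc (0 : ℝ) 1),
        {A : Finset (Set.Icc (0 : ℝ) 1) | A.card = m + 1 ∧ σ A = B}.Finite := by
  constructor
  · intro h
    apply stmt0.1
    exact Cardinal.lift_lt.1
      (by rwa [Cardinal.lift_continuum, Cardinal.lift_aleph, Ordinal.lift_omega0])
  · intro hex
    have h0 := stmt0.2 hex
    have h1 := Cardinal.lift_lt.2 h0
    rwa [Cardinal.lift_continuum, Cardinal.lift_aleph, Ordinal.lift_omega0] at h1
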